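/- The function H(c) = ∫₀^∞ du/(c e^u − u) is strictly decreasing on (−∞, 0), with H(c) → 0 as c → −∞ and H(c) → −∞ as c → 0−. -/

import Mathlib

open MeasureTheory Real Filter Set

private lemma inv_le_inv_neg' {a b : ℝ} (hb : b < 0) (h : a ≤ b) : b⁻¹ ≤ a⁻¹ := by
  have ha : a < 0 := lt_of_le_of_lt h hb
  have ha' : a ≠ 0 := ne_of_lt ha
  have hb' : b ≠ 0 := ne_of_lt hb
  have h1 : b⁻¹ - a⁻¹ = (a - b) / (a * b) := by
    field_simp
  have h2 : (a - b) / (a * b) ≤ 0 :=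
    div_nonpos_of_nonpos_of_nonneg (by linarith) (le_of_lt (mul_pos_of_neg_of_neg ha hb))
  linarith
private lemma inv_lt_inv_neg' {a b : ℝ} (hb : b < 0) (h : a < b) : b⁻¹ < a⁻¹ := by
  have ha : a < 0 := lt_trans h hb
  have ha' : a ≠ 0 := ne_of_lt ha
  have hb' : b ≠ 0 := ne_of_lt hb
  have h1 : b⁻¹ - a⁻¹ = (a - b) / (a * b) := by
    field_simp
  have h2 : (a - b) / (a * b) < 0 :=
    div_neg_of_neg_of_pos (by linarith) (mul_pos_of_neg_of_neg ha hb)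
  linarith

private lemma denom_neg {c u : ℝ} (hc : c < 0) (hu : 0 ≤ u) : c * Real.exp u - u < 0 := by
  have h1 : c * Real.exp u < 0 := mul_neg_of_neg_of_pos hc (Real.exp_pos u)
  linarith

private lemma Hcont {c : ℝ} (hc : c < 0) :
    ContinuousOn (fun u : ℝ => (c * Real.exp u - u)⁻¹) (Ici 0) := by
  apply ContinuousOn.inv₀
  · fun_prop
  · exact fun u hu => ne_of_lt (denom_neg hc hu)

private lemma Hint {c : ℝ} (hc : c < 0) :
    IntegrableOn (fun u : ℝ => (c * Real.exp u - u)⁻¹) (Ioi 0) := by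
  have hg : IntegrableOn (fun u : ℝ => (-c)⁻¹ * Real.exp (-u)) (Ioi 0) := by
    have := (exp_neg_integrableOn_Ioi 0 one_pos).const_mul (-c)⁻¹
    simpa [neg_mul, one_mul, IntegrableOn] using this
  refine Integrable.mono hg (((Hcont hc).mono Ioi_subset_Ici_self).aestronglyMeasurable
    measurableSet_Ioi) ?_
  filter_upwards [ae_restrict_mem measurableSet_Ioi] with u hu
  have hu0 : (0:ℝ) < u := hu
  have hd := denom_neg hc hu0.le
  have h2 : (0:ℝ) < -c * Real.exp u := mul_pos (by linarith) (Real.exp_pos u)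
  have h3 : -c * Real.exp u ≤ -(c * Real.exp u - u) := by linarith
  rw [Real.norm_eq_abs, Real.norm_eq_abs, abs_inv, abs_of_neg hd,
    abs_of_pos (mul_pos (inv_pos.mpr (by linarith : (0:ℝ) < -c)) (Real.exp_pos (-u)))]
  calc (-(c * Real.exp u - u))⁻¹ ≤ (-c * Real.exp u)⁻¹ := inv_anti₀ h2 h3
    _ = (-c)⁻¹ * Real.exp (-u) := by rw [mul_inv, Real.exp_neg]

theorem H_left_branch :
    StrictAntiOn (fun c : ℝ => ∫ u in Set.Ioi (0:ℝ), (c * Real.exp u - u)⁻¹)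
      (Set.Iio 0) ∧
    Tendsto (fun c : ℝ => ∫ u in Set.Ioi (0:ℝ), (c * Real.exp u - u)⁻¹)
      atBot (nhds 0) ∧
    Tendsto (fun c : ℝ => ∫ u in Set.Ioi (0:ℝ), (c * Real.exp u - u)⁻¹)
      (nhdsWithin 0 (Set.Iio 0)) atBot := by
  refine ⟨?_, ?_, ?_⟩
  · -- StrictAntiOn
    intro a ha b hb hab
    simp only [Set.mem_Iio] at ha hb
    have hpos : 0 < ∫ u in Ioi (0:ℝ),
        ((a * Real.exp u - u)⁻¹ - (b * Real.exp u - u)⁻¹) := by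
      rw [setIntegral_pos_iff_support_of_nonneg_ae]
      · have hsub : Ioi (0:ℝ) ⊆ Function.support
            (fun u => (a * Real.exp u - u)⁻¹ - (b * Real.exp u - u)⁻¹) := by
          intro u hu
          have hu0 : (0:ℝ) < u := hu
          have hda := denom_neg ha hu0.le
          have hdb := denom_neg hb hu0.le
          have hlt : a * Real.exp u - u < b * Real.exp u - u := by
            have := mul_lt_mul_of_pos_right hab (Real.exp_pos u)
            linarith
          have := inv_lt_inv_neg' hdb hlt
          simp only [Function.mem_support]
          intro hcontra
          nlinarith [this]
        have : volume (Function.support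
            (fun u => (a * Real.exp u - u)⁻¹ - (b * Real.exp u - u)⁻¹) ∩ Ioi 0) =
            volume (Ioi (0:ℝ)) := by
          rw [Set.inter_eq_right.mpr hsub]
        rw [this]
        simp
      · filter_upwards [ae_restrict_mem measurableSet_Ioi] with u hu
        have hu0 : (0:ℝ) < u := hu
        have hda := denom_neg ha hu0.le
        have hdb := denom_neg hb hu0.le
        have hlt : a * Real.exp u - u ≤ b * Real.exp u - u := by
          nlinarith [Real.exp_pos u]
        have := inv_le_inv_neg' hdb hlt
        simp only [Pi.zero_apply]
        linarith
      · exact (Hint ha).sub (Hint hb)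
    have heq : ∫ u in Ioi (0:ℝ),
        ((a * Real.exp u - u)⁻¹ - (b * Real.exp u - u)⁻¹) =
        (∫ u in Ioi (0:ℝ), (a * Real.exp u - u)⁻¹) -
        (∫ u in Ioi (0:ℝ), (b * Real.exp u - u)⁻¹) :=
      integral_sub (Hint ha) (Hint hb)
    simp only
    linarith [heq ▸ hpos]
  · -- limit at -∞
    have hub : ∀ᶠ c : ℝ in atBot,
        (∫ u in Ioi (0:ℝ), (c * Real.exp u - u)⁻¹) ≤ 0 := by
      filter_upwards [eventually_lt_atBot (0:ℝ)] with c hc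
      apply integral_nonpos_of_ae
      filter_upwards [ae_restrict_mem measurableSet_Ioi] with u hu
      have hu0 : (0:ℝ) < u := hu
      exact le_of_lt (inv_neg''.mpr (denom_neg hc hu0.le))
    have hlb : ∀ᶠ c : ℝ in atBot,
        c⁻¹ ≤ ∫ u in Ioi (0:ℝ), (c * Real.exp u - u)⁻¹ := by
      filter_upwards [eventually_lt_atBot (0:ℝ)] with c hc
      have hg : IntegrableOn (fun u : ℝ => c⁻¹ * Real.exp (-u)) (Ioi 0) := by
        have := (exp_neg_integrableOn_Ioi 0 one_pos).const_mul c⁻¹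
        simpa [neg_mul, one_mul, IntegrableOn] using this
      have hmono : (∫ u in Ioi (0:ℝ), c⁻¹ * Real.exp (-u)) ≤
          ∫ u in Ioi (0:ℝ), (c * Real.exp u - u)⁻¹ := by
        apply setIntegral_mono_on hg (Hint hc) measurableSet_Ioi
        intro u hu
        have hu0 : (0:ℝ) < u := hu
        have hce : c * Real.exp u < 0 := mul_neg_of_neg_of_pos hc (Real.exp_pos u)
        have h1 : c⁻¹ * Real.exp (-u) = (c * Real.exp u)⁻¹ := by
          rw [mul_inv, Real.exp_neg]
        rw [h1]
        exact inv_le_inv_neg' hce (by linarith)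
      have hval : (∫ u in Ioi (0:ℝ), c⁻¹ * Real.exp (-u)) = c⁻¹ := by
        rw [integral_const_mul, integral_exp_neg_Ioi_zero, mul_one]
      linarith
    have hinv : Tendsto (fun c : ℝ => c⁻¹) atBot (nhds 0) := by
      have h := ((tendsto_inv_atTop_zero (𝕜 := ℝ)).comp tendsto_neg_atBot_atTop).neg
      simp only [Function.comp_def, inv_neg, neg_neg, neg_zero] at h
      exact h
    exact tendsto_of_tendsto_of_tendsto_of_le_of_le' hinv
      tendsto_const_nhds hlb hub
  · -- limit at 0⁻
    set e : ℝ := Real.exp 1 with he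
    have hepos : 0 < e := Real.exp_pos 1
    have hbound : ∀ c : ℝ, c < 0 →
        (∫ u in Ioi (0:ℝ), (c * Real.exp u - u)⁻¹) ≤ Real.log (-(c * e)) := by
      intro c hc
      have hce : c * e < 0 := mul_neg_of_neg_of_pos hc hepos
      -- split off the piece on Ioc 0 1
      have hsplit : (∫ u in Ioi (0:ℝ), (c * Real.exp u - u)⁻¹) =
          (∫ u in Ioc (0:ℝ) 1, (c * Real.exp u - u)⁻¹) +
          (∫ u in Ioi (1:ℝ), (c * Real.exp u - u)⁻¹) := by
        rw [← setIntegral_union (Set.Ioc_disjoint_Ioi le_rfl) measurableSet_Ioi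
          ((Hint hc).mono_set Ioc_subset_Ioi_self)
          ((Hint hc).mono_set (Ioi_subset_Ioi zero_le_one)),
          Ioc_union_Ioi_eq_Ioi zero_le_one]
      have htail : (∫ u in Ioi (1:ℝ), (c * Real.exp u - u)⁻¹) ≤ 0 := by
        apply integral_nonpos_of_ae
        filter_upwards [ae_restrict_mem measurableSet_Ioi] with u hu
        have hu1 : (1:ℝ) < u := hu
        exact le_of_lt (inv_neg''.mpr (denom_neg hc (by linarith)))
      have hg2 : IntegrableOn (fun u : ℝ => (c * e - u)⁻¹) (Ioc 0 1) := by
        apply ContinuousOn.integrableOn_compact isCompact_Icc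
          ((ContinuousOn.inv₀ (by fun_prop) ?_)) |>.mono_set Ioc_subset_Icc_self
        intro u hu
        have : c * e - u < 0 := by
          have := hu.1
          linarith
        exact ne_of_lt this
      have hmono2 : (∫ u in Ioc (0:ℝ) 1, (c * Real.exp u - u)⁻¹) ≤
          ∫ u in Ioc (0:ℝ) 1, (c * e - u)⁻¹ := by
        apply setIntegral_mono_on ((Hint hc).mono_set Ioc_subset_Ioi_self) hg2
          measurableSet_Ioc
        intro u hu
        have hd : c * Real.exp u - u < 0 := denom_neg hc hu.1.le
        have hle : c * e - u ≤ c * Real.exp u - u := by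
          have h1 : Real.exp u ≤ e := Real.exp_le_exp.mpr hu.2
          nlinarith
        exact inv_le_inv_neg' hd hle
      have hval2 : (∫ u in Ioc (0:ℝ) 1, (c * e - u)⁻¹) =
          Real.log (-(c * e)) - Real.log (1 - c * e) := by
        rw [← intervalIntegral.integral_of_le zero_le_one]
        have hderiv : ∀ u ∈ uIcc (0:ℝ) 1,
            HasDerivAt (fun u : ℝ => -Real.log (u - c * e)) ((c * e - u)⁻¹) u := by
          intro u hu
          rw [Set.uIcc_of_le zero_le_one] at hu
          have hne : u - c * e ≠ 0 := by
            have := hu.1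
            intro h; nlinarith
          have h1 : HasDerivAt (fun u : ℝ => u - c * e) 1 u :=
            (hasDerivAt_id u).sub_const _
          have h2 : HasDerivAt (fun u : ℝ => Real.log (u - c * e)) (1 / (u - c * e)) u :=
            h1.log hne
          have h3 := h2.neg
          have : -(1 / (u - c * e)) = (c * e - u)⁻¹ := by
            rw [one_div, ← inv_neg, neg_sub]
          rwa [this] at h3
        have hcont : IntervalIntegrable (fun u : ℝ => (c * e - u)⁻¹) volume 0 1 := by
          apply ContinuousOn.intervalIntegrable
          apply ContinuousOn.inv₀ (by fun_prop)
          intro u hu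
          rw [Set.uIcc_of_le zero_le_one] at hu
          have := hu.1
          intro h; nlinarith
        rw [intervalIntegral.integral_eq_sub_of_hasDerivAt hderiv hcont]
        have h0 : (0:ℝ) - c * e = -(c * e) := by ring
        rw [h0]
        ring
      have hlog : Real.log (-(c * e)) - Real.log (1 - c * e) ≤ Real.log (-(c * e)) := by
        have : (0:ℝ) ≤ Real.log (1 - c * e) := Real.log_nonneg (by linarith)
        linarith
      calc (∫ u in Ioi (0:ℝ), (c * Real.exp u - u)⁻¹)
          = _ + _ := hsplit
        _ ≤ (∫ u in Ioc (0:ℝ) 1, (c * Real.exp u - u)⁻¹) := by linarith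
        _ ≤ ∫ u in Ioc (0:ℝ) 1, (c * e - u)⁻¹ := hmono2
        _ = Real.log (-(c * e)) - Real.log (1 - c * e) := hval2
        _ ≤ Real.log (-(c * e)) := hlog
    have hG : Tendsto (fun c : ℝ => Real.log (-(c * e))) (nhdsWithin 0 (Iio 0)) atBot := by
      apply Real.tendsto_log_nhdsGT_zero.comp
      apply tendsto_nhdsWithin_of_tendsto_nhds_of_eventually_within
      · have hcont : Continuous (fun c : ℝ => -(c * e)) := by fun_prop
        have h := hcont.tendsto 0
        simp only [zero_mul, neg_zero] at h
        exact h.mono_left nhdsWithin_le_nhds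
      · filter_upwards [self_mem_nhdsWithin] with c hc
        have : c < 0 := hc
        exact mem_Ioi.mpr (by nlinarith)
    apply tendsto_atBot_mono' _ _ hG
    filter_upwards [self_mem_nhdsWithin] with c hc
    exact hbound c hc
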